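/- arXiv:2502.13193 — 2 statements merged into one kernel-verified Lean document; each statement's English description precedes it below -/
import Mathlib

section
/- With f_i(z) = √2·cos(√2·ω_iᵀz + β_i) for ω_i ∼ N(0, I_{dL}), β_i uniform on [0,2π), and all data blocks of squared norm u, define g_i^{(ℓ)}(y) = e^{u(L−ℓ)}·f_i(ȳ) for y ∈ ℝ^{dℓ} with zero-padding ȳ ∈ ℝ^{dL}. Then for every x ∈ ℝ^{dL} (a concatenation of L blocks of squared norm u) and every y ∈ ℝ^{dℓ}, E[f_i(x)·g_i^{(ℓ)}(y)] = exp(−‖x^{[:ℓ]} − y‖₂²). -/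
open MeasureTheory ProbabilityTheory Real Finset

/-- The uniform distribution on `[0, 2π)`. -/
noncomputable def uniform02pi : Measure ℝ :=
  (ENNReal.ofReal (2 * Real.pi))⁻¹ • volume.restrict (Set.Ico 0 (2 * Real.pi))

theorem my_pi_prod {n : ℕ} {E : Fin n → Type*} [∀ i, MeasurableSpace (E i)]
    (μ : ∀ i, Measure (E i)) [∀ i, SigmaFinite (μ i)] (f : ∀ i, E i → ℂ) :
    ∫ x : ∀ i, E i, ∏ i, f i (x i) ∂Measure.pi μ = ∏ i, ∫ x, f i x ∂μ i := by
  induction n with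
  | zero => simp [Measure.pi_of_empty, Measure.real]
  | succ n ih =>
      calc
        _ = ∫ x : E 0 × ((i : Fin n) → E (Fin.succ i)),
            f 0 x.1 * ∏ i : Fin n, f (Fin.succ i) (x.2 i)
            ∂(μ 0).prod (Measure.pi fun i => μ (Fin.succ i)) := by
          rw [← ((measurePreserving_piFinSuccAbove μ 0).symm).integral_comp']
          simp_rw [MeasurableEquiv.piFinSuccAbove_symm_apply, Fin.insertNthEquiv,
            Fin.prod_univ_succ, Fin.insertNth_zero, Equiv.coe_fn_mk, Fin.cons_succ,
            Fin.zero_succAbove, Fin.cons_zero]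
          rfl
        _ = (∫ x, f 0 x ∂μ 0) * ∏ i : Fin n, ∫ x, f (Fin.succ i) x ∂μ (Fin.succ i) := by
          rw [← ih, ← integral_prod_mul]
        _ = ∏ i, ∫ x, f i x ∂μ i := by rw [Fin.prod_univ_succ]

theorem gauss1 (t : ℝ) :
    ∫ z : ℝ, Complex.exp (t * z * Complex.I) ∂gaussianReal 0 1
      = Complex.exp (-(t:ℂ)^2 / 2) := by
  rw [gaussianReal_of_var_ne_zero 0 one_ne_zero]
  have hpdf : volume.withDensity (gaussianPDF 0 1)
      = volume.withDensity (fun x => ((Real.toNNReal (gaussianPDFReal 0 1 x) : NNReal) : ENNReal)) := rfl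
  rw [hpdf, integral_withDensity_eq_integral_smul
    ((measurable_gaussianPDFReal 0 1).real_toNNReal) _]
  have : ∀ z : ℝ, (Real.toNNReal (gaussianPDFReal 0 1 z)) •
      Complex.exp (t * z * Complex.I)
      = ((Real.sqrt (2 * π))⁻¹ : ℂ) * Complex.exp ((-(1/2) : ℂ) * z^2 + (t * Complex.I) * z + 0) := by
    intro z
    rw [NNReal.smul_def, Real.coe_toNNReal _ (gaussianPDFReal_nonneg 0 1 z),
      gaussianPDFReal, Complex.real_smul]
    push_cast [Complex.ofReal_exp]
    rw [mul_assoc, ← Complex.exp_add]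
    congr 1
    · norm_num
    · congr 1
      ring
  simp_rw [this]
  rw [integral_const_mul, integral_cexp_quadratic (by norm_num) (t * Complex.I) 0]
  have h1 : ((π : ℂ) / -(-(1/2))) = ((2 * π : ℝ) : ℂ) := by push_cast; ring
  rw [h1, show (1/2 : ℂ) = ((1/2 : ℝ) : ℂ) by norm_num,
    ← Complex.ofReal_cpow (by positivity), ← Real.sqrt_eq_rpow, ← mul_assoc,
    ← Complex.ofReal_inv, ← Complex.ofReal_mul, inv_mul_cancel₀ (by positivity),
    Complex.ofReal_one, one_mul]
  congr 1
  rw [mul_pow, Complex.I_sq]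
  push_cast
  ring

theorem gaussFin {n : ℕ} (t : Fin n → ℝ) :
    ∫ x : Fin n → ℝ, Complex.exp ((∑ i, t i * x i : ℝ) * Complex.I)
      ∂(Measure.pi fun _ : Fin n => gaussianReal 0 1)
      = Complex.exp (-((∑ i, (t i)^2 : ℝ) : ℂ) / 2) := by
  have h : ∀ x : Fin n → ℝ, Complex.exp (((∑ i, t i * x i : ℝ) : ℂ) * Complex.I)
      = ∏ i, (fun z : ℝ => Complex.exp ((t i : ℂ) * (z : ℂ) * Complex.I)) (x i) := by
    intro x
    rw [← Complex.exp_sum]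
    congr 1
    push_cast
    rw [Finset.sum_mul]
  simp_rw [h]
  refine (my_pi_prod (fun _ : Fin n => gaussianReal 0 1)
    (fun i (z : ℝ) => Complex.exp ((t i : ℂ) * z * Complex.I))).trans ?_
  simp_rw [gauss1, ← Complex.exp_sum]
  congr 1
  push_cast
  rw [neg_div, Finset.sum_div, ← Finset.sum_neg_distrib]
  exact Finset.sum_congr rfl fun i _ => by ring

theorem gaussNested {L d : ℕ} (t : Fin L → Fin d → ℝ) :
    ∫ ω : Fin L → Fin d → ℝ, Complex.exp ((∑ i, ∑ j, t i j * ω i j : ℝ) * Complex.I)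
      ∂(Measure.pi fun _ : Fin L => Measure.pi fun _ : Fin d => gaussianReal 0 1)
      = Complex.exp (-((∑ i, ∑ j, (t i j)^2 : ℝ) : ℂ) / 2) := by
  have h : ∀ ω : Fin L → Fin d → ℝ, Complex.exp (((∑ i, ∑ j, t i j * ω i j : ℝ) : ℂ) * Complex.I)
      = ∏ i, (fun w : Fin d → ℝ => Complex.exp (((∑ j, t i j * w j : ℝ) : ℂ) * Complex.I)) (ω i) := by
    intro ω
    rw [← Complex.exp_sum]
    congr 1
    push_cast
    rw [Finset.sum_mul]
  simp_rw [h]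
  refine (my_pi_prod (fun _ : Fin L => Measure.pi fun _ : Fin d => gaussianReal 0 1)
    (fun i (w : Fin d → ℝ) => Complex.exp (((∑ j, t i j * w j : ℝ) : ℂ) * Complex.I))).trans ?_
  simp_rw [gaussFin, ← Complex.exp_sum]
  congr 1
  push_cast
  rw [neg_div, Finset.sum_div, ← Finset.sum_neg_distrib]
  exact Finset.sum_congr rfl fun i _ => by rw [neg_div, Finset.sum_div]

theorem cosNested {L d : ℕ} (t : Fin L → Fin d → ℝ) :
    ∫ ω : Fin L → Fin d → ℝ, Real.cos (∑ i, ∑ j, t i j * ω i j)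
      ∂(Measure.pi fun _ : Fin L => Measure.pi fun _ : Fin d => gaussianReal 0 1)
      = Real.exp (-(∑ i, ∑ j, (t i j)^2) / 2) := by
  set ν := (Measure.pi fun _ : Fin L => Measure.pi fun _ : Fin d => gaussianReal 0 1)
  have hInt : Integrable (fun ω : Fin L → Fin d → ℝ =>
      Complex.exp ((∑ i, ∑ j, t i j * ω i j : ℝ) * Complex.I)) ν := by
    refine Integrable.mono' (integrable_const 1) ?_
      (Filter.Eventually.of_forall fun ω => ?_)
    · refine Continuous.aestronglyMeasurable ?_
      fun_prop
    · rw [Complex.norm_exp]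
      simp
  have h2 := integral_re (μ := ν) hInt
  simp only [RCLike.re_to_complex] at h2
  simp_rw [Complex.exp_ofReal_mul_I_re] at h2
  rw [h2, gaussNested t,
    show (-((∑ i, ∑ j, (t i j)^2 : ℝ) : ℂ) / 2) = ((-(∑ i, ∑ j, (t i j)^2) / 2 : ℝ) : ℂ) by
      push_cast; ring,
    Complex.exp_ofReal_re]

instance : IsProbabilityMeasure uniform02pi := by
  constructor
  rw [uniform02pi]
  rw [Measure.smul_apply, Measure.restrict_apply MeasurableSet.univ, Set.univ_inter,
    Real.volume_Ico, smul_eq_mul, sub_zero]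
  rw [ENNReal.inv_mul_cancel]
  · simp [Real.pi_pos]
  · exact ENNReal.ofReal_ne_top

theorem beta_int (c : ℝ) : ∫ β, Real.cos (2 * β + c) ∂uniform02pi = 0 := by
  rw [uniform02pi, integral_smul_measure]
  have h1 : ∫ β in Set.Ico 0 (2*π), Real.cos (2 * β + c)
      = ∫ β in Set.Ioc 0 (2*π), Real.cos (2 * β + c) :=
    setIntegral_congr_set Ico_ae_eq_Ioc
  rw [h1, ← intervalIntegral.integral_of_le (by positivity),
    intervalIntegral.integral_comp_mul_add Real.cos two_ne_zero c,
    integral_cos]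
  have h2 : 2 * (2 * π) + c = (c + 2*π) + 2*π := by ring
  have h3 : 2 * 0 + c = c := by ring
  rw [h2, h3, Real.sin_add_two_pi, Real.sin_add_two_pi]
  simp

/-- with `f(z) = √2·cos(√2·ωᵀz + β)` for `ω ∼ N(0, I_{dL})`, `β` uniform
on `[0,2π)`, data `x ∈ ℝ^{dL}` a concatenation of `L` blocks of squared norm `u`, and
`g^{(ℓ)}(y) = e^{u(L−ℓ)}·f(ȳ)` where `ȳ` is the zero-padding of `y ∈ ℝ^{dℓ}` (modeled
as a block vector `ybar` vanishing on blocks `≥ ℓ`),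
`E[f(x)·g^{(ℓ)}(y)] = exp(−‖x^{[:ℓ]} − y‖²)`. -/
theorem stmt_11 (d L ℓ : ℕ) (hℓ : ℓ ≤ L) (u : ℝ)
    (x : Fin L → EuclideanSpace ℝ (Fin d)) (hx : ∀ i, ‖x i‖ ^ 2 = u)
    (ybar : Fin L → EuclideanSpace ℝ (Fin d))
    (hpad : ∀ i : Fin L, ℓ ≤ (i : ℕ) → ybar i = 0) :
    ∫ p : (Fin L → Fin d → ℝ) × ℝ,
        (Real.sqrt 2 *
            Real.cos (Real.sqrt 2 * (∑ i, ∑ j, p.1 i j * x i j) + p.2)) *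
          (Real.exp (u * ((L : ℝ) - ℓ)) *
            (Real.sqrt 2 *
              Real.cos (Real.sqrt 2 * (∑ i, ∑ j, p.1 i j * ybar i j) + p.2)))
        ∂((Measure.pi fun _ : Fin L => Measure.pi fun _ : Fin d =>
            gaussianReal 0 1).prod uniform02pi) =
      Real.exp (-(∑ i ∈ Finset.univ.filter (fun i : Fin L => (i : ℕ) < ℓ),
        ‖x i - ybar i‖ ^ 2)) := by
  set ν := (Measure.pi fun _ : Fin L => Measure.pi fun _ : Fin d => gaussianReal 0 1) with hν
  set C := Real.exp (u * ((L : ℝ) - ℓ)) with hC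
  set a : (Fin L → Fin d → ℝ) → ℝ := fun ω => Real.sqrt 2 * (∑ i, ∑ j, ω i j * x i j) with ha
  set b : (Fin L → Fin d → ℝ) → ℝ := fun ω => Real.sqrt 2 * (∑ i, ∑ j, ω i j * ybar i j) with hb
  have h2 : Real.sqrt 2 * Real.sqrt 2 = 2 := Real.mul_self_sqrt (by norm_num)
  have key : ∀ P Q C' : ℝ, (Real.sqrt 2 * Real.cos P) * (C' * (Real.sqrt 2 * Real.cos Q))
      = C' * (Real.cos (P - Q) + Real.cos (Q + P)) := by
    intro P Q C'
    rw [Real.cos_sub, Real.cos_add]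
    linear_combination (Real.cos P * Real.cos Q * C') * h2
  -- integrability of the two pieces
  have hI1 : Integrable (fun p : (Fin L → Fin d → ℝ) × ℝ => Real.cos (a p.1 - b p.1))
      (ν.prod uniform02pi) := by
    refine Integrable.mono' (integrable_const 1) ?_
      (Filter.Eventually.of_forall fun p => by simpa using Real.abs_cos_le_one _)
    refine Continuous.aestronglyMeasurable ?_
    fun_prop
  have hI2 : Integrable (fun p : (Fin L → Fin d → ℝ) × ℝ => Real.cos (2 * p.2 + (a p.1 + b p.1)))
      (ν.prod uniform02pi) := by
    refine Integrable.mono' (integrable_const 1) ?_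
      (Filter.Eventually.of_forall fun p => by simpa using Real.abs_cos_le_one _)
    refine Continuous.aestronglyMeasurable ?_
    fun_prop
  calc
    ∫ p : (Fin L → Fin d → ℝ) × ℝ,
        (Real.sqrt 2 * Real.cos (Real.sqrt 2 * (∑ i, ∑ j, p.1 i j * x i j) + p.2)) *
          (C * (Real.sqrt 2 * Real.cos (Real.sqrt 2 * (∑ i, ∑ j, p.1 i j * ybar i j) + p.2)))
        ∂(ν.prod uniform02pi)
      = ∫ p : (Fin L → Fin d → ℝ) × ℝ,
          C * (Real.cos (a p.1 - b p.1) + Real.cos (2 * p.2 + (a p.1 + b p.1)))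
          ∂(ν.prod uniform02pi) := by
        refine integral_congr_ae (Filter.Eventually.of_forall fun p => ?_)
        dsimp only
        rw [key (Real.sqrt 2 * (∑ i, ∑ j, p.1 i j * x i j) + p.2)
          (Real.sqrt 2 * (∑ i, ∑ j, p.1 i j * ybar i j) + p.2) C]
        simp only [ha, hb]
        ring_nf
    _ = C * ((∫ p : (Fin L → Fin d → ℝ) × ℝ, Real.cos (a p.1 - b p.1) ∂(ν.prod uniform02pi))
          + ∫ p : (Fin L → Fin d → ℝ) × ℝ, Real.cos (2 * p.2 + (a p.1 + b p.1))
            ∂(ν.prod uniform02pi)) := by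
        rw [integral_const_mul, integral_add hI1 hI2]
    _ = Real.exp (-(∑ i ∈ Finset.univ.filter (fun i : Fin L => (i : ℕ) < ℓ),
        ‖x i - ybar i‖ ^ 2)) := by
        have hI2z : (∫ p : (Fin L → Fin d → ℝ) × ℝ, Real.cos (2 * p.2 + (a p.1 + b p.1))
            ∂(ν.prod uniform02pi)) = 0 := by
          rw [integral_prod _ hI2]
          have hb0 : ∀ ω : Fin L → Fin d → ℝ,
              (∫ β, Real.cos (2 * β + (a ω + b ω)) ∂uniform02pi) = 0 :=
            fun ω => beta_int (a ω + b ω)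
          simp_rw [hb0]
          simp
        have hab : ∀ ω : Fin L → Fin d → ℝ,
            a ω - b ω = ∑ i, ∑ j, (Real.sqrt 2 * (x i j - ybar i j)) * ω i j := by
          intro ω
          rw [ha, hb]
          dsimp only
          rw [Finset.mul_sum, Finset.mul_sum, ← Finset.sum_sub_distrib]
          refine Finset.sum_congr rfl fun i _ => ?_
          rw [Finset.mul_sum, Finset.mul_sum, ← Finset.sum_sub_distrib]
          refine Finset.sum_congr rfl fun j _ => ?_
          ring
        have hsq : (∑ i, ∑ j, (Real.sqrt 2 * (x i j - ybar i j))^2)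
            = 2 * ∑ i, ∑ j, (x i j - ybar i j)^2 := by
          rw [Finset.mul_sum]
          refine Finset.sum_congr rfl fun i _ => ?_
          rw [Finset.mul_sum]
          refine Finset.sum_congr rfl fun j _ => ?_
          rw [mul_pow, Real.sq_sqrt (by norm_num : (0:ℝ) ≤ 2)]
        have hnorm : ∀ i : Fin L, (∑ j, (x i j - ybar i j)^2) = ‖x i - ybar i‖^2 := by
          intro i
          rw [EuclideanSpace.norm_eq, Real.sq_sqrt (by positivity)]
          refine Finset.sum_congr rfl fun j _ => ?_
          rw [Real.norm_eq_abs, sq_abs]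
          rfl
        have hcard1 : (Finset.univ.filter (fun i : Fin L => (i : ℕ) < ℓ)).card = ℓ := by
          rw [Finset.card_filter, Fin.sum_univ_eq_sum_range (fun k => if k < ℓ then 1 else 0) L,
            ← Finset.sum_subset (Finset.range_subset_range.2 hℓ)
              (fun k _ hk => if_neg (by simpa using hk))]
          exact (Finset.sum_congr rfl fun k hk => if_pos (Finset.mem_range.1 hk)).trans (by simp)
        have hcard2 : (Finset.univ.filter (fun i : Fin L => ¬ (i : ℕ) < ℓ)).card = L - ℓ := by
          have := Finset.card_filter_add_card_filter_not
            (s := (Finset.univ : Finset (Fin L))) (p := fun i : Fin L => (i : ℕ) < ℓ)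
          rw [Finset.card_univ, Fintype.card_fin, hcard1] at this
          omega
        have hsplit : (∑ i, ∑ j, (x i j - ybar i j)^2)
            = (∑ i ∈ Finset.univ.filter (fun i : Fin L => (i : ℕ) < ℓ), ‖x i - ybar i‖ ^ 2)
              + u * ((L : ℝ) - ℓ) := by
          simp_rw [hnorm]
          rw [← Finset.sum_filter_add_sum_filter_not Finset.univ (fun i : Fin L => (i : ℕ) < ℓ)
            (fun i => ‖x i - ybar i‖ ^ 2)]
          congr 1
          have hval : ∀ i ∈ Finset.univ.filter (fun i : Fin L => ¬ (i : ℕ) < ℓ),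
              ‖x i - ybar i‖ ^ 2 = u := by
            intro i hi
            simp only [Finset.mem_filter, not_lt] at hi
            rw [hpad i hi.2, sub_zero, hx i]
          rw [Finset.sum_congr rfl hval, Finset.sum_const, nsmul_eq_mul, hcard2,
            Nat.cast_sub hℓ]
          ring
        have hI1v : (∫ p : (Fin L → Fin d → ℝ) × ℝ, Real.cos (a p.1 - b p.1)
            ∂(ν.prod uniform02pi))
            = Real.exp (-((∑ i ∈ Finset.univ.filter (fun i : Fin L => (i : ℕ) < ℓ),
                ‖x i - ybar i‖ ^ 2) + u * ((L : ℝ) - ℓ))) := by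
          rw [integral_prod _ hI1]
          simp only [integral_const, measure_univ, ENNReal.toReal_one, probReal_univ, one_smul]
          simp_rw [hab]
          rw [hν, cosNested (fun i j => Real.sqrt 2 * (x i j - ybar i j)), hsq]
          rw [← hsplit]
          congr 1
          ring
        rw [hI2z, add_zero, hI1v, hC, ← Real.exp_add]
        congr 1
        ring
end

section
/- Let p̃_v = KDE estimates with additive error at most α for true values p_v ≥ 0 over a finite vocabulary V, i.e., |p̃_v − p_v| ≤ α for all v, and suppose Σ_v p_v = P > α|V|. Then for every v, the sampling probability q̃_v = p̃_v / Σ_{v'} p̃_{v'} satisfies |q̃_v − p_v/P| ≤ 2α|V| / (P − α|V|) · max(1, p_v/P). -/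
open Finset

/-- let `p̃` be KDE estimates over a finite vocabulary `V` with additive
error at most `α` w.r.t. the true nonnegative scores `p` (with `p̃ ≥ 0`, e.g. after
clipping), and suppose `P = Σ_v p_v > α|V|`. Then for every `v`, the sampling
probability `q̃_v = p̃_v / Σ_{v'} p̃_{v'}` satisfies
`|q̃_v − p_v/P| ≤ 2α|V|/(P − α|V|) · max(1, p_v/P)`. -/
theorem stmt_17 {V : Type*} [Fintype V] (α : ℝ) (p ptilde : V → ℝ)
    (hp : ∀ v, 0 ≤ p v) (hptilde : ∀ v, 0 ≤ ptilde v)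
    (herr : ∀ v, |ptilde v - p v| ≤ α)
    (P : ℝ) (hP : P = ∑ v : V, p v)
    (hbig : α * (Fintype.card V : ℝ) < P) :
    ∀ v : V,
      |ptilde v / (∑ v' : V, ptilde v') - p v / P| ≤
        2 * α * (Fintype.card V : ℝ) / (P - α * (Fintype.card V : ℝ)) *
          max 1 (p v / P) := by
  intro v
  have hn1 : (1 : ℝ) ≤ (Fintype.card V : ℝ) := by
    exact_mod_cast Fintype.card_pos_iff.mpr ⟨v⟩
  set n : ℝ := (Fintype.card V : ℝ) with hn
  have hα : 0 ≤ α := le_trans (abs_nonneg _) (herr v)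
  have hA : 0 ≤ α * n := mul_nonneg hα (by linarith)
  have hαA : α ≤ α * n := by nlinarith
  have hPpos : 0 < P := lt_of_le_of_lt hA hbig
  set S := ∑ v' : V, ptilde v' with hSdef
  have hSP : |S - P| ≤ α * n := by
    rw [hP, ← Finset.sum_sub_distrib]
    calc |∑ x : V, (ptilde x - p x)| ≤ ∑ x : V, |ptilde x - p x| :=
          Finset.abs_sum_le_sum_abs _ _
      _ ≤ ∑ _x : V, α := Finset.sum_le_sum (fun x _ => herr x)
      _ = (Fintype.card V : ℝ) * α := by
          rw [Finset.sum_const, nsmul_eq_mul, Finset.card_univ]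
      _ = α * n := mul_comm _ _
  have hSlb : P - α * n ≤ S := by have := abs_le.mp hSP; linarith
  have hSpos : 0 < S := lt_of_lt_of_le (by linarith) hSlb
  set M := max 1 (p v / P) with hMdef
  have hM1 : (1 : ℝ) ≤ M := le_max_left _ _
  have hM2 : p v / P ≤ M := le_max_right _ _
  have hpvM : p v ≤ M * P := by
    rw [div_le_iff₀ hPpos] at hM2; linarith
  have hnum : |ptilde v * P - p v * S| ≤ α * P + p v * (α * n) := by
    have h1 : ptilde v * P - p v * S = (ptilde v - p v) * P + p v * (P - S) := by
      ring
    rw [h1]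
    calc |(ptilde v - p v) * P + p v * (P - S)|
        ≤ |(ptilde v - p v) * P| + |p v * (P - S)| := abs_add_le _ _
      _ = |ptilde v - p v| * P + p v * |P - S| := by
          rw [abs_mul, abs_mul, abs_of_pos hPpos, abs_of_nonneg (hp v)]
      _ ≤ α * P + p v * (α * n) := by
          have h2 : |P - S| ≤ α * n := by rw [abs_sub_comm]; exact hSP
          have h3 := herr v
          have := hp v
          nlinarith
  have key : |ptilde v / S - p v / P| ≤ (α * P + p v * (α * n)) / (S * P) := by
    rw [div_sub_div _ _ (ne_of_gt hSpos) (ne_of_gt hPpos), abs_div,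
      abs_of_pos (mul_pos hSpos hPpos)]
    rw [mul_comm S (p v)]
    gcongr
  calc |ptilde v / S - p v / P| ≤ (α * P + p v * (α * n)) / (S * P) := key
    _ ≤ (2 * (α * n) * M * P) / ((P - α * n) * P) := by
        apply div_le_div₀ (by positivity) ?_ (by nlinarith) ?_
        · nlinarith [mul_nonneg hA (hp v), mul_nonneg (mul_nonneg hA hPpos.le) (by linarith : (0:ℝ) ≤ M - 1)]
        · nlinarith
    _ = 2 * α * n / (P - α * n) * M := by
        rw [div_mul_eq_mul_div, div_eq_div_iff (ne_of_gt (by nlinarith)) (ne_of_gt (by nlinarith : (0:ℝ) < P - α * n))]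
        ring
end
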